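/- Hilbert–Nagata theorem for module-algebras: Let A = ⊕_{i∈I} A_i be an I-graded k-algebra which is a left H-module-algebra, and assume that: A_0 = k·1_A; A is Noetherian and finitely generated as a k-algebra; and each homogeneous component A_i is stable under the H-action and is semisimple as an H-module. Then the subalgebra of invariants A^H is Noetherian and finitely generated as a k-algebra. -/

import Mathlib

open TensorProduct

/-- The action of `H` on `A` by scalar multiplication, packaged as a `k`-bilinear map. -/
noncomputable def actMap (k H A : Type*) [CommSemiring k] [Semiring H] [Algebra k H]
    [AddCommMonoid A] [Module k A] [Module H A] [IsScalarTower k H A] [SMulCommClass k H A] :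
    H →ₗ[k] A →ₗ[k] A :=
  LinearMap.mk₂ k (fun h a => h • a) (fun h h' a => add_smul h h' a)
    (fun c h a => smul_assoc c h a) (fun h a a' => smul_add h a a')
    (fun c h a => (smul_comm c h a).symm)

/-- A `k`-submodule `V` of `A` is stable under the `H`-action. -/
def IsHStable (H : Type*) {k A : Type*} [Semiring k] [AddCommMonoid A] [Module k A] [SMul H A]
    (V : Submodule k A) : Prop :=
  ∀ (h : H), ∀ a ∈ V, h • a ∈ V

/-- A `k`-submodule `V` of `A` is a simple `H`-submodule: it is `H`-stable, nonzero, and its only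
`H`-stable `k`-submodules are `⊥` and `V`. -/
def IsSimpleHSub (H : Type*) {k A : Type*} [Semiring k] [AddCommMonoid A] [Module k A] [SMul H A]
    (V : Submodule k A) : Prop :=
  IsHStable H V ∧ V ≠ ⊥ ∧ ∀ U : Submodule k A, U ≤ V → IsHStable H U → U = ⊥ ∨ U = V

/-- A `k`-submodule `W` of `A` is semisimple as an `H`-module: it is the sum of the simple
`H`-submodules contained in it. -/
def IsSemisimpleHSub (H : Type*) {k A : Type*} [Semiring k] [AddCommMonoid A] [Module k A]
    [SMul H A] (W : Submodule k A) : Prop :=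
  W = sSup {V : Submodule k A | IsSimpleHSub H V ∧ V ≤ W}

section HSubHelpers
variable {k H A : Type*} [Semiring k] [Semiring H] [AddCommMonoid A] [Module k A] [Module H A]

/-- Promote an `H`-stable `k`-submodule to an `H`-submodule. -/
def hSub (V : Submodule k A) (hV : IsHStable H V) : Submodule H A where
  carrier := V
  add_mem' := fun ha hb => V.add_mem ha hb
  zero_mem' := V.zero_mem
  smul_mem' := fun h {a} ha => hV h a ha

@[simp] theorem mem_hSub {V : Submodule k A} {hV : IsHStable H V} {a : A} :
    a ∈ hSub V hV ↔ a ∈ V := Iff.rfl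

theorem hSub_isAtom {V : Submodule k A} (hV : IsSimpleHSub H V)
    [SMul k H] [IsScalarTower k H A] :
    IsAtom (hSub V hV.1) := by
  constructor
  · intro hbot
    exact hV.2.1 (by ext a; exact SetLike.ext_iff.mp hbot a)
  · intro b hb
    have hble : b.restrictScalars k ≤ V := fun a ha => hb.le ha
    have hst : IsHStable H (b.restrictScalars k) := fun h a ha => b.smul_mem h ha
    rcases hV.2.2 _ hble hst with h0 | hV'
    · ext a
      simpa using SetLike.ext_iff.mp h0 a
    · refine absurd ?_ hb.ne
      ext a
      simpa using (SetLike.ext_iff.mp hV' a)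
end HSubHelpers

section ActLemmas
variable {k H A : Type*} [CommSemiring k] [Semiring H] [Algebra k H] [Coalgebra k H]
    [Semiring A] [Algebra k A] [Module H A] [IsScalarTower k H A] [SMulCommClass k H A]

theorem lift_act_left (x a : A) (hx : ∀ h : H, h • x = Coalgebra.counit (R := k) h • x)
    (h : H) :
    TensorProduct.lift ((LinearMap.mul k A).compl₁₂
        ((actMap k H A).flip x) ((actMap k H A).flip a)) (Coalgebra.comul (R := k) h)
      = x * (h • a) := by
  have heq : TensorProduct.lift ((LinearMap.mul k A).compl₁₂
        ((actMap k H A).flip x) ((actMap k H A).flip a))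
      = (LinearMap.mulLeft k x) ∘ₗ ((actMap k H A).flip a)
          ∘ₗ (TensorProduct.lid k H).toLinearMap
          ∘ₗ (LinearMap.rTensor H (Coalgebra.counit (R := k))) := by
    apply TensorProduct.ext'
    intro h₁ h₂
    simp only [TensorProduct.lift.tmul, LinearMap.compl₁₂_apply, LinearMap.coe_comp,
      Function.comp_apply, LinearMap.rTensor_tmul, TensorProduct.lid_tmul,
      LinearEquiv.coe_coe, LinearMap.mul_apply', LinearMap.mulLeft_apply,
      LinearMap.flip_apply]
    simp only [actMap, LinearMap.mk₂_apply]
    rw [hx h₁, smul_assoc (Coalgebra.counit (R := k) h₁) h₂ a,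
      smul_mul_assoc (Coalgebra.counit (R := k) h₁) x (h₂ • a),
      mul_smul_comm (Coalgebra.counit (R := k) h₁) x (h₂ • a)]
  rw [heq]
  simp only [LinearMap.coe_comp, Function.comp_apply, LinearEquiv.coe_coe]
  rw [Coalgebra.rTensor_counit_comul (R := k) h]
  simp only [TensorProduct.lid_tmul, one_smul, LinearMap.flip_apply, actMap,
    LinearMap.mk₂_apply, LinearMap.mulLeft_apply]

theorem lift_act_right (x a : A) (hx : ∀ h : H, h • x = Coalgebra.counit (R := k) h • x)
    (h : H) :
    TensorProduct.lift ((LinearMap.mul k A).compl₁₂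
        ((actMap k H A).flip a) ((actMap k H A).flip x)) (Coalgebra.comul (R := k) h)
      = (h • a) * x := by
  have heq : TensorProduct.lift ((LinearMap.mul k A).compl₁₂
        ((actMap k H A).flip a) ((actMap k H A).flip x))
      = (LinearMap.mulRight k x) ∘ₗ ((actMap k H A).flip a)
          ∘ₗ (TensorProduct.rid k H).toLinearMap
          ∘ₗ (LinearMap.lTensor H (Coalgebra.counit (R := k))) := by
    apply TensorProduct.ext'
    intro h₁ h₂
    simp only [TensorProduct.lift.tmul, LinearMap.compl₁₂_apply, LinearMap.coe_comp,
      Function.comp_apply, LinearMap.lTensor_tmul, TensorProduct.rid_tmul,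
      LinearEquiv.coe_coe, LinearMap.mul_apply', LinearMap.mulRight_apply,
      LinearMap.flip_apply]
    simp only [actMap, LinearMap.mk₂_apply]
    rw [hx h₂, smul_assoc (Coalgebra.counit (R := k) h₂) h₁ a,
      mul_smul_comm (Coalgebra.counit (R := k) h₂) (h₁ • a) x,
      smul_mul_assoc (Coalgebra.counit (R := k) h₂) (h₁ • a) x]
  rw [heq]
  simp only [LinearMap.coe_comp, Function.comp_apply, LinearEquiv.coe_coe]
  rw [Coalgebra.lTensor_counit_comul (R := k) h]
  simp only [TensorProduct.rid_tmul, one_smul, LinearMap.flip_apply, actMap,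
    LinearMap.mk₂_apply, LinearMap.mulRight_apply]

end ActLemmas

section Core
variable {k H A : Type*}
variable [Field k] [Ring H] [Algebra k H] [Coalgebra k H]
variable [Ring A] [Algebra k A] [Module H A] [IsScalarTower k H A] [SMulCommClass k H A]

/-- The submodule of `H`-invariants, as an `H`-submodule. -/
def invSub (k : Type*) (H : Type*) (A : Type*) [Field k] [Ring H] [Algebra k H] [Coalgebra k H]
    [Ring A] [Algebra k A] [Module H A] [IsScalarTower k H A] [SMulCommClass k H A] :
    Submodule H A where
  carrier := {a | ∀ h : H, h • a = Coalgebra.counit (R := k) h • a}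
  add_mem' := by
    intro a b ha hb h
    rw [smul_add, ha h, hb h, smul_add]
  zero_mem' := by intro h; rw [smul_zero, smul_zero]
  smul_mem' := by
    intro h' a ha
    have hk : ∀ (c : k) (b : A), (∀ h : H, h • b = Coalgebra.counit (R := k) h • b) →
        ∀ h : H, h • (c • b) = Coalgebra.counit (R := k) h • (c • b) := by
      intro c b hb h
      rw [smul_comm, hb h, smul_comm]
    intro h
    rw [ha h']
    exact hk _ a ha h

theorem mem_invSub {a : A} :
    a ∈ invSub k H A ↔ ∀ h : H, h • a = Coalgebra.counit (R := k) h • a := Iff.rfl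

/-- Trivial transfer: if an `H`-linear map from `U` into `A` is injective with invariant values,
then `U` consists of invariants. -/
theorem le_invSub_of_map (U : Submodule H A) (f : ↥U →ₗ[H] A)
    (hinj : ∀ u : U, f u = 0 → u = 0) (hran : ∀ u : U, f u ∈ invSub k H A) :
    U ≤ invSub k H A := by
  intro a ha h
  set u : U := ⟨a, ha⟩
  have h1 : f (h • u - Coalgebra.counit (R := k) h • u) = 0 := by
    rw [map_sub, map_smul, LinearMap.map_smul_of_tower, sub_eq_zero]
    exact hran u h
  have h2 := hinj _ h1
  rw [sub_eq_zero] at h2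
  have := congrArg (Subtype.val) h2
  simpa using this

end Core

section Compl
variable (k H A : Type*)
variable [Field k] [Ring H] [Algebra k H] [Coalgebra k H]
variable [Ring A] [Algebra k A] [Module H A] [IsScalarTower k H A] [SMulCommClass k H A]

/-- The sum of all simple `H`-submodules of `A` on which `H` does not act through the counit. -/
def nontrivPart : Submodule H A :=
  sSup {W : Submodule H A | IsAtom W ∧ W ⊓ invSub k H A = ⊥}

variable {k H A}

theorem map_atom_le_nontrivPart (e : A →ₗ[H] A) (U : Submodule H A) (hU : IsAtom U)
    (hUd : U ⊓ invSub k H A = ⊥) : Submodule.map e U ≤ nontrivPart k H A := by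
  by_cases hbot : Submodule.map e U = ⊥
  · rw [hbot]; exact bot_le
  have hker : ¬ U ≤ LinearMap.ker e := by
    intro hle
    apply hbot
    rw [eq_bot_iff]
    rintro w ⟨u, hu, rfl⟩
    simpa using hle hu
  have hkerU : LinearMap.ker e ⊓ U = ⊥ := by
    rcases (hU.le_iff.mp (inf_le_right : LinearMap.ker e ⊓ U ≤ U)) with h | h
    · exact h
    · exact absurd (inf_eq_right.mp h) hker
  have hinj : ∀ u : U, e u = 0 → u = 0 := by
    intro u hu
    have : (u : A) ∈ LinearMap.ker e ⊓ U := ⟨hu, u.2⟩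
    rw [hkerU] at this
    exact Subtype.ext this
  -- the image is an atom
  have hatom : IsAtom (Submodule.map e U) := by
    constructor
    · exact hbot
    · intro b hb
      by_contra hbne
      have hb' : Submodule.comap e b ⊓ U ≠ ⊥ := by
        intro hc
        apply hbne
        rw [eq_bot_iff]
        intro w hw
        obtain ⟨u, hu, rfl⟩ := hb.le hw
        have : u ∈ Submodule.comap e b ⊓ U := ⟨hw, hu⟩
        rw [hc] at this
        simp only [Submodule.mem_bot] at this
        subst this
        simp
      have hb2 : Submodule.comap e b ⊓ U = U :=
        ((hU.le_iff.mp (inf_le_right : Submodule.comap e b ⊓ U ≤ U)).resolve_left hb')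
      have : Submodule.map e U ≤ b := by
        intro w hw
        obtain ⟨u, hu, rfl⟩ := hw
        have : u ∈ Submodule.comap e b ⊓ U := hb2.symm ▸ hu
        exact this.1
      exact hb.2 this
  -- the image is disjoint from the invariants
  have hdisj : Submodule.map e U ⊓ invSub k H A = ⊥ := by
    rcases hatom.le_iff.mp (inf_le_left : Submodule.map e U ⊓ invSub k H A ≤ _) with h | h
    · exact h
    · exfalso
      have hle : Submodule.map e U ≤ invSub k H A := inf_eq_left.mp h
      have : U ≤ invSub k H A := by
        refine le_invSub_of_map U (e ∘ₗ U.subtype) ?_ ?_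
        · intro u hu; exact hinj u hu
        · intro u
          exact hle ⟨u, u.2, rfl⟩
      have : U = ⊥ := by rw [← hUd, inf_eq_left.mpr this]
      exact hU.1 this
  exact le_sSup ⟨hatom, hdisj⟩

theorem map_nontrivPart_le (e : A →ₗ[H] A) :
    ∀ c ∈ nontrivPart k H A, e c ∈ nontrivPart k H A := by
  have : Submodule.map e (nontrivPart k H A) ≤ nontrivPart k H A := by
    rw [Submodule.map_le_iff_le_comap, nontrivPart]
    refine sSup_le fun U hU => ?_
    rw [← Submodule.map_le_iff_le_comap]
    exact map_atom_le_nontrivPart e U hU.1 hU.2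
  intro c hc
  exact this ⟨c, hc, rfl⟩

theorem isCompl_invSub [IsSemisimpleModule H A] :
    IsCompl (invSub k H A) (nontrivPart k H A) := by
  constructor
  · -- disjoint
    rw [disjoint_iff]
    by_contra hne
    obtain ⟨V, hVatom, hVle⟩ :=
      (eq_bot_or_exists_atom_le (invSub k H A ⊓ nontrivPart k H A)).resolve_left hne
    obtain ⟨V', hV'⟩ := exists_isCompl V
    set π := Submodule.linearProjOfIsCompl V V' hV' with hπ
    have hU : ∃ U, (IsAtom U ∧ U ⊓ invSub k H A = ⊥) ∧ ¬ U ≤ LinearMap.ker π := by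
      by_contra hall
      push_neg at hall
      have : nontrivPart k H A ≤ LinearMap.ker π :=
        sSup_le fun U hU => hall U hU
      obtain ⟨v, hv, hvne⟩ := Submodule.ne_bot_iff V |>.mp hVatom.1
      have hvC : v ∈ nontrivPart k H A := (hVle.trans inf_le_right) hv
      have : π v = 0 := this hvC
      rw [show π v = ⟨v, hv⟩ from Submodule.projectionOnto_apply_of_mem_left hV' hv] at this
      exact hvne (congrArg Subtype.val this)
    obtain ⟨U, ⟨hUatom, hUd⟩, hUker⟩ := hU
    have hUinv : U ≤ invSub k H A := by
      haveI : IsSimpleModule H U := (isSimpleModule_iff_isAtom (m := U)).mpr hUatom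
      haveI : IsSimpleModule H V := (isSimpleModule_iff_isAtom (m := V)).mpr hVatom
      set f : ↥U →ₗ[H] ↥V := π ∘ₗ U.subtype with hf
      have hfne : f ≠ 0 := by
        intro hf0
        apply hUker
        intro u hu
        have : f ⟨u, hu⟩ = 0 := by rw [hf0]; rfl
        simpa [f] using congrArg Subtype.val this
      have hbij := (f.bijective_or_eq_zero).resolve_right hfne
      refine le_invSub_of_map U (V.subtype ∘ₗ f) ?_ ?_
      · intro u hu
        have : f u = 0 := by
          apply Subtype.ext
          simpa using congrArg id hu
        exact hbij.1 (by rw [this, map_zero])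
      · intro u
        exact (hVle.trans inf_le_left) (f u).2
    have : U = ⊥ := by rw [← hUd, inf_eq_left.mpr hUinv]
    exact hUatom.1 this
  · -- codisjoint
    rw [codisjoint_iff]
    rw [eq_top_iff, ← sSup_atoms_eq_top (α := Submodule H A)]
    refine sSup_le fun W hW => ?_
    rcases hW.le_iff.mp (inf_le_left : W ⊓ invSub k H A ≤ W) with h | h
    · refine le_trans ?_ (le_sup_right : nontrivPart k H A ≤ _)
      rw [nontrivPart]
      exact le_sSup ⟨hW, h⟩
    · exact le_trans (inf_eq_left.mp h) le_sup_left

end Compl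

/-- Extract a finite generating subset from a set spanning a Noetherian module. -/
theorem exists_finset_subset_span_eq {R M : Type*} [Semiring R] [AddCommMonoid M] [Module R M]
    [IsNoetherian R M] (s : Set M) :
    ∃ t : Finset M, ↑t ⊆ s ∧ Submodule.span R (↑t : Set M) = Submodule.span R s := by
  classical
  obtain ⟨g, hg⟩ := IsNoetherian.noetherian (Submodule.span R s)
  have hmem : ∀ x ∈ g, x ∈ Submodule.span R s := by
    intro x hx
    rw [← hg]
    exact Submodule.subset_span hx
  choose t ht hxt using fun (x : {x // x ∈ g}) =>
    Submodule.mem_span_finite_of_mem_span (hmem x.1 x.2)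
  refine ⟨g.attach.biUnion t, ?_, ?_⟩
  · intro y hy
    simp only [Finset.coe_biUnion, Set.mem_iUnion] at hy
    obtain ⟨x, -, hx⟩ := hy
    exact ht x hx
  · apply le_antisymm
    · apply Submodule.span_le.mpr
      intro y hy
      simp only [Finset.coe_biUnion, Set.mem_iUnion, Finset.mem_coe] at hy
      obtain ⟨x, -, hx⟩ := hy
      exact Submodule.subset_span (ht x hx)
    · rw [← hg]
      apply Submodule.span_le.mpr
      intro x hx
      refine Submodule.span_mono ?_ (hxt ⟨x, hx⟩)
      intro y hy
      simp only [Finset.coe_biUnion, Set.mem_iUnion]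
      exact ⟨⟨x, hx⟩, Finset.mem_attach _ _, hy⟩
/-- **Hilbert–Nagata theorem for module-algebras.**
Let `H` be a Hopf algebra over a field `k` and `A = ⊕_{i ∈ I} 𝒜 i` an `I`-graded `k`-algebra
(the order on `I` satisfying `0 ≤ i`, translation invariance, cancellation `i+j = i → j = 0`,
and well-foundedness) which is a left `H`-module-algebra
(`h • (a*b) = Σ (h₁ • a)(h₂ • b)`, `h • 1 = ε(h) • 1`).  Assume `𝒜 0 = k·1`, that `A` is
Noetherian and finitely generated, and that each `𝒜 i` is `H`-stable and semisimple as an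
`H`-module.  Then the subalgebra of invariants `A^H` is Noetherian and finitely generated. -/
theorem hilbert_nagata_module_algebra
    {k H : Type*} [Field k] [Ring H] [HopfAlgebra k H]
    {I : Type*} [AddCommMonoid I] [PartialOrder I] [DecidableEq I]
    (hle0 : ∀ i : I, 0 ≤ i)
    (hcov : ∀ i j l : I, i ≤ j → i + l ≤ j + l)
    (hcancel : ∀ i j : I, i + j = i → j = 0)
    (hwf : WellFounded ((· < ·) : I → I → Prop))
    {A : Type*} [Ring A] [Algebra k A] [Module H A]
    [IsScalarTower k H A] [SMulCommClass k H A]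
    (hma_mul : ∀ (h : H) (a b : A), h • (a * b) =
      TensorProduct.lift ((LinearMap.mul k A).compl₁₂
        ((actMap k H A).flip a) ((actMap k H A).flip b)) (Coalgebra.comul (R := k) h))
    (hma_one : ∀ h : H, h • (1 : A) = Coalgebra.counit (R := k) h • (1 : A))
    (𝒜 : I → Submodule k A)
    (hinternal : DirectSum.IsInternal 𝒜)
    (hzero : 𝒜 0 = Submodule.span k {(1 : A)})
    (hgmul : ∀ i j : I, ∀ a ∈ 𝒜 i, ∀ b ∈ 𝒜 j, a * b ∈ 𝒜 (i + j))
    (hNoeth : IsNoetherianRing A)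
    (hft : Algebra.FiniteType k A)
    (hstable : ∀ i : I, IsHStable H (𝒜 i))
    (hss : ∀ i : I, IsSemisimpleHSub H (𝒜 i))
    (AH : Subalgebra k A)
    (hAH : ∀ a : A, a ∈ AH ↔ ∀ h : H, h • a = Coalgebra.counit (R := k) h • a) :
    IsNoetherianRing AH ∧ Algebra.FiniteType k AH := by
  classical
  -- invariant membership
  have hAHinv : ∀ a : A, a ∈ AH ↔ a ∈ invSub k H A := fun a => hAH a
  -- 1. `A` is a semisimple `H`-module
  have hsimple_top : sSup {m : Submodule H A | IsSimpleModule H m} = ⊤ := by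
    rw [eq_top_iff]
    have hres : (⊤ : Submodule k A) ≤
        (sSup {m : Submodule H A | IsSimpleModule H m}).restrictScalars k := by
      rw [← hinternal.submodule_iSup_eq_top]
      refine iSup_le fun i => ?_
      conv_lhs => rw [hss i]
      refine sSup_le fun V hV => ?_
      intro a ha
      have h2 : hSub V hV.1.1 ≤ sSup {m : Submodule H A | IsSimpleModule H m} := by
        apply le_sSup
        show IsSimpleModule H _
        rw [isSimpleModule_iff_isAtom]
        exact hSub_isAtom hV.1
      exact h2 ha
    intro a _
    exact hres Submodule.mem_top
  haveI hsemi : IsSemisimpleModule H A :=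
    IsSemisimpleModule.of_sSup_simples_eq_top hsimple_top
  have hcompl : IsCompl (invSub k H A) (nontrivPart k H A) := isCompl_invSub
  -- 2. multiplication by invariants is `H`-linear
  have hLmul : ∀ x ∈ invSub k H A, ∀ (h : H) (a : A), h • (x * a) = x * (h • a) := by
    intro x hx h a
    rw [hma_mul]
    exact lift_act_left x a hx h
  have hRmul : ∀ x ∈ invSub k H A, ∀ (h : H) (a : A), h • (a * x) = (h • a) * x := by
    intro x hx h a
    rw [hma_mul]
    exact lift_act_right x a hx h
  -- 3. the Reynolds operator
  set q : A →ₗ[H] ↥(invSub k H A) :=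
    Submodule.linearProjOfIsCompl (invSub k H A) (nontrivPart k H A) hcompl with hq
  set p : A → A := fun a => ((q a : A)) with hp
  have hp_mem : ∀ a, p a ∈ invSub k H A := fun a => (q a).2
  have hp_add : ∀ a b, p (a + b) = p a + p b := by
    intro a b; simp only [hp, map_add, Submodule.coe_add]
  have hp_sum : ∀ (s : Finset A) (g : A → A),
      p (∑ y ∈ s, g y) = ∑ y ∈ s, p (g y) := by
    intro s g
    simp only [hp, map_sum, AddSubmonoidClass.coe_finset_sum]
  have hp_inv : ∀ a ∈ invSub k H A, p a = a := by
    intro a ha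
    simp only [hp]
    rw [show q a = ⟨a, ha⟩ from Submodule.linearProjOfIsCompl_apply_left hcompl ⟨a, ha⟩]
  have hp_C : ∀ a ∈ nontrivPart k H A, p a = 0 := by
    intro a ha
    simp only [hp]
    rw [show q a = 0 from Submodule.projectionOnto_apply_of_mem_right hcompl ha, ZeroMemClass.coe_zero]
  have hp_decomp : ∀ a : A, a - p a ∈ nontrivPart k H A := by
    intro a
    have htop : a ∈ invSub k H A ⊔ nontrivPart k H A := by
      rw [codisjoint_iff.mp hcompl.codisjoint]; trivial
    obtain ⟨x, hx, y, hy, rfl⟩ := Submodule.mem_sup.mp htop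
    have h1 : p (x + y) = x := by rw [hp_add, hp_inv x hx, hp_C y hy, add_zero]
    rw [h1, add_sub_cancel_left]
    exact hy
  have hprod_inv : ∀ x ∈ invSub k H A, ∀ y ∈ invSub k H A, x * y ∈ invSub k H A := by
    intro x hx y hy
    exact (hAHinv _).mp (AH.mul_mem ((hAHinv x).mpr hx) ((hAHinv y).mpr hy))
  have hp_mull : ∀ x ∈ invSub k H A, ∀ a : A, p (x * a) = x * p a := by
    intro x hx a
    let Lx : A →ₗ[H] A :=
      { toFun := fun b => x * b
        map_add' := mul_add x
        map_smul' := fun h b => by simpa using (hLmul x hx h b).symm }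
    have h1 : x * a = x * p a + x * (a - p a) := by rw [mul_sub]; abel
    have h2 : x * (a - p a) ∈ nontrivPart k H A :=
      map_nontrivPart_le Lx _ (hp_decomp a)
    rw [h1, hp_add, hp_inv _ (hprod_inv x hx _ (hp_mem a)), hp_C _ h2, add_zero]
  have hp_mulr : ∀ x ∈ invSub k H A, ∀ a : A, p (a * x) = p a * x := by
    intro x hx a
    let Rx : A →ₗ[H] A :=
      { toFun := fun b => b * x
        map_add' := fun b c => add_mul b c x
        map_smul' := fun h b => by simpa using (hRmul x hx h b).symm }
    have h1 : a * x = p a * x + (a - p a) * x := by rw [sub_mul]; abel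
    have h2 : (a - p a) * x ∈ nontrivPart k H A :=
      map_nontrivPart_le Rx _ (hp_decomp a)
    rw [h1, hp_add, hp_inv _ (hprod_inv _ (hp_mem a) x hx), hp_C _ h2, add_zero]
  -- 4. Noetherianity of the invariant subalgebra
  haveI hNoethA : IsNoetherian A A := hNoeth
  have hcontr : ∀ (J : Ideal ↥AH) (x : ↥AH),
      (x : A) ∈ Submodule.span A (Subtype.val '' (J : Set ↥AH)) → x ∈ J := by
    intro J x hx
    have key : ∀ y ∈ Submodule.span A (Subtype.val '' (J : Set ↥AH)), ∀ a : A,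
        p (a * y) ∈ Submodule.map (AH.val.toLinearMap) (J.restrictScalars k) := by
      intro y hy
      refine Submodule.span_induction ?_ ?_ ?_ ?_ hy
      · rintro _ ⟨j, hj, rfl⟩ a
        rw [hp_mulr _ ((hAHinv _).mp j.2) a]
        refine ⟨(⟨p a, (hAHinv _).mpr (hp_mem a)⟩ : ↥AH) * j, ?_, rfl⟩
        exact J.smul_mem _ hj
      · intro a
        rw [mul_zero, show p 0 = 0 from by simpa using hp_add 0 0]
        exact Submodule.zero_mem _
      · intro y z _ _ hy hz a
        rw [mul_add, hp_add]
        exact Submodule.add_mem _ (hy a) (hz a)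
      · intro r y _ hy a
        rw [smul_eq_mul, ← mul_assoc]
        exact hy (a * r)
    have h1 : (x : A) ∈ Submodule.map (AH.val.toLinearMap) (J.restrictScalars k) := by
      have := key _ hx 1
      rwa [one_mul, hp_inv _ ((hAHinv _).mp x.2)] at this
    obtain ⟨j, hj, hjx⟩ := h1
    have : j = x := Subtype.ext hjx
    rwa [← this]
  have hNoethAH : IsNoetherianRing ↥AH := by
    rw [isNoetherianRing_iff, ← monotone_stabilizes_iff_noetherian]
    intro f
    let g : ℕ →o Submodule A A :=
      ⟨fun n => Submodule.span A (Subtype.val '' ((f n : Ideal ↥AH) : Set ↥AH)),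
       fun n m hnm => Submodule.span_mono (Set.image_mono (f.mono hnm))⟩
    obtain ⟨n, hn⟩ := monotone_stabilizes_iff_noetherian.mpr hNoethA g
    refine ⟨n, fun m hm => ?_⟩
    refine le_antisymm (f.mono hm) ?_
    intro x hxm
    refine hcontr (f n) x ?_
    have h1 : (x : A) ∈ g m := Submodule.subset_span ⟨x, hxm, rfl⟩
    rwa [← hn m hm] at h1
  refine ⟨hNoethAH, ?_⟩
  -- 5. Finite generation: graded structure
  haveI : SetLike.GradedMonoid 𝒜 :=
    { one_mem := by rw [hzero]; exact Submodule.mem_span_singleton_self 1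
      mul_mem := fun {i j a b} ha hb => hgmul i j a ha b hb }
  letI : DirectSum.Decomposition 𝒜 := hinternal.chooseDecomposition
  have hπ_mem : ∀ (i : I) (a : A), (DirectSum.decompose 𝒜 a i : A) ∈ 𝒜 i :=
    fun i a => (DirectSum.decompose 𝒜 a i).2
  have hsum_applyI : ∀ (i : I) (s : Finset I) (g : I → A),
      (DirectSum.decompose 𝒜 (∑ m ∈ s, g m) i : A)
        = ∑ m ∈ s, (DirectSum.decompose 𝒜 (g m) i : A) := by
    intro i s g
    rw [DirectSum.decompose_sum, DFinsupp.finset_sum_apply, AddSubmonoidClass.coe_finset_sum]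
  have hsum_applyA : ∀ (i : I) (s : Finset A) (g : A → A),
      (DirectSum.decompose 𝒜 (∑ m ∈ s, g m) i : A)
        = ∑ m ∈ s, (DirectSum.decompose 𝒜 (g m) i : A) := by
    intro i s g
    rw [DirectSum.decompose_sum, DFinsupp.finset_sum_apply, AddSubmonoidClass.coe_finset_sum]
  have hπ_smulH : ∀ (h : H) (a : A) (i : I),
      (DirectSum.decompose 𝒜 (h • a) i : A) = h • (DirectSum.decompose 𝒜 a i : A) := by
    intro h a i
    conv_lhs => rw [← DirectSum.sum_support_decompose 𝒜 a, Finset.smul_sum]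
    rw [hsum_applyI]
    have hterm : ∀ m ∈ (DirectSum.decompose 𝒜 a).support,
        (DirectSum.decompose 𝒜 (h • (DirectSum.decompose 𝒜 a m : A)) i : A)
          = if m = i then h • (DirectSum.decompose 𝒜 a m : A) else 0 := by
      intro m _
      by_cases hmi : m = i
      · subst hmi
        rw [if_pos rfl, DirectSum.decompose_of_mem_same 𝒜 (hstable m h _ (hπ_mem m a))]
      · rw [if_neg hmi, DirectSum.decompose_of_mem_ne 𝒜 (hstable m h _ (hπ_mem m a)) hmi]
    rw [Finset.sum_congr rfl hterm, Finset.sum_ite_eq' _ i]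
    by_cases hi : i ∈ (DirectSum.decompose 𝒜 a).support
    · rw [if_pos hi]
    · rw [if_neg hi]
      have h0 : DirectSum.decompose 𝒜 a i = 0 := DFinsupp.notMem_support_iff.mp hi
      rw [h0, ZeroMemClass.coe_zero, smul_zero]
  have hπ_inv : ∀ a ∈ invSub k H A, ∀ i : I,
      (DirectSum.decompose 𝒜 a i : A) ∈ invSub k H A := by
    intro a ha i h
    rw [← hπ_smulH h a i, ha h, DirectSum.decompose_smul, DFinsupp.smul_apply]
    rfl
  -- positive-degree invariants and a finite generating set
  obtain ⟨F, hFS, hFspan⟩ := exists_finset_subset_span_eq (R := A)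
    {a : A | a ∈ invSub k H A ∧ ∃ i : I, i ≠ 0 ∧ a ∈ 𝒜 i}
  have hFinv : ∀ f ∈ F, f ∈ invSub k H A := fun f hf => (hFS hf).1
  have main : ∀ i : I, ∀ x ∈ 𝒜 i, x ∈ invSub k H A →
      x ∈ Algebra.adjoin k (↑F : Set A) := by
    intro i
    refine hwf.induction
      (C := fun i => ∀ x ∈ 𝒜 i, x ∈ invSub k H A → x ∈ Algebra.adjoin k (↑F : Set A)) i ?_
    intro i IH x hx hxinv
    by_cases hi : i = 0
    · subst hi
      rw [hzero] at hx
      obtain ⟨c, rfl⟩ := Submodule.mem_span_singleton.mp hx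
      exact Subalgebra.smul_mem _ (Subalgebra.one_mem _) c
    · have hxJ : x ∈ Submodule.span A (↑F : Set A) := by
        rw [hFspan]
        exact Submodule.subset_span ⟨hxinv, i, hi, hx⟩
      obtain ⟨c, -, hc⟩ := Submodule.mem_span_finset.mp hxJ
      have hx1 : x = ∑ f ∈ F, p (c f) * f := by
        calc x = p x := (hp_inv x hxinv).symm
          _ = ∑ f ∈ F, p (c f • f) := by rw [← hc, hp_sum]
          _ = ∑ f ∈ F, p (c f) * f := Finset.sum_congr rfl fun f hf => by
                rw [smul_eq_mul, hp_mulr f (hFinv f hf) (c f)]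
      have e1 : (DirectSum.decompose 𝒜 x i : A) = x := DirectSum.decompose_of_mem_same 𝒜 hx
      have e2 : (DirectSum.decompose 𝒜 x i : A)
          = ∑ f ∈ F, (DirectSum.decompose 𝒜 (p (c f) * f) i : A) := by
        conv_lhs => rw [hx1]
        rw [hsum_applyA]
      have e3 : ∀ f ∈ F, (DirectSum.decompose 𝒜 (p (c f) * f) i : A)
          = ∑ j ∈ (DirectSum.decompose 𝒜 (p (c f))).support,
              (DirectSum.decompose 𝒜 ((DirectSum.decompose 𝒜 (p (c f)) j : A) * f) i : A) := by
        intro f hf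
        conv_lhs => rw [← DirectSum.sum_support_decompose 𝒜 (p (c f)), Finset.sum_mul]
        rw [hsum_applyI]
      have hx2 : x = ∑ f ∈ F, ∑ j ∈ (DirectSum.decompose 𝒜 (p (c f))).support,
          (DirectSum.decompose 𝒜 ((DirectSum.decompose 𝒜 (p (c f)) j : A) * f) i : A) := by
        rw [← e1, e2]
        exact Finset.sum_congr rfl e3
      rw [hx2]
      refine Subalgebra.sum_mem _ fun f hf => Subalgebra.sum_mem _ fun j _ => ?_
      obtain ⟨df, hdf0, hfdeg⟩ := (hFS hf).2
      have hterm : (DirectSum.decompose 𝒜 (p (c f)) j : A) * f ∈ 𝒜 (j + df) :=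
        hgmul j df _ (hπ_mem j _) f hfdeg
      by_cases hji : j + df = i
      · rw [DirectSum.decompose_of_mem_same 𝒜 (hji ▸ hterm)]
        have hjle : j ≤ i := by
          have h1 := hcov 0 df j (hle0 df)
          rw [zero_add, add_comm] at h1
          exact hji ▸ h1
        have hjne : j ≠ i := by
          intro hji'
          subst hji'
          exact hdf0 (hcancel j df hji)
        exact mul_mem (IH j (lt_of_le_of_ne hjle hjne) _ (hπ_mem j _)
          (hπ_inv _ (hp_mem (c f)) j)) (Algebra.subset_adjoin hf)
      · rw [DirectSum.decompose_of_mem_ne 𝒜 hterm hji]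
        exact Subalgebra.zero_mem _
  have hAHle : ∀ x ∈ invSub k H A, x ∈ Algebra.adjoin k (↑F : Set A) := by
    intro x hx
    rw [← DirectSum.sum_support_decompose 𝒜 x]
    exact Subalgebra.sum_mem _ fun i _ => main i _ (hπ_mem i x) (hπ_inv x hx i)
  have hadj : Algebra.adjoin k (↑F : Set A) = AH := by
    apply le_antisymm
    · exact Algebra.adjoin_le fun f hf => (hAHinv f).mpr (hFinv f hf)
    · intro x hx
      exact hAHle x ((hAHinv x).mp hx)
  exact (Subalgebra.fg_iff_finiteType AH).mp ⟨F, hadj⟩
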